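/- Let $p$ be an odd prime and consider the graded ring $S = B[\tilde x, \tilde b]/(a\tilde x + \tilde b y + a \tilde b c,\ x \tilde b - \tilde x b)$ over $B = \mathbb{Z}_p[x,y,a,b,c]/(xy-p, ax+by+abc)$, with $\tilde x, \tilde b$ of degree 1. Then $\mathrm{Proj}_B(S)$ is isomorphic to the blowup of $\mathrm{Spec}(B)$ along the ideal $(x,b)$. -/

import Mathlib

open MvPolynomial

namespace Stmt19Aux

lemma sub_aeval_mem {R : Type*} [CommRing R] {k : ℕ} (v : Fin k → MvPolynomial (Fin k) R)
    (Js : Ideal (MvPolynomial (Fin k) R)) (hv : ∀ i, X i - v i ∈ Js) (h : MvPolynomial (Fin k) R) :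
    h - aeval v h ∈ Js := by
  induction h using MvPolynomial.induction_on with
  | C a => simp [algebraMap_eq]
  | add f g hf hg =>
      have := Js.add_mem hf hg
      have he : f - aeval v f + (g - aeval v g) = f + g - aeval v (f + g) := by
        rw [map_add]; ring
      rwa [he] at this
  | mul_X f i hf =>
      have he : f * X i - aeval v (f * X i)
          = (f - aeval v f) * X i + aeval v f * (X i - v i) := by
        rw [map_mul, aeval_X]; ring
      rw [he]
      exact Js.add_mem (Js.mul_mem_right _ hf) (Js.mul_mem_left _ (hv i))

variable (p : ℕ) [Fact p.Prime]

noncomputable abbrev fP : MvPolynomial (Fin 5) ℤ_[p] := X 0 * X 1 - C (p : ℤ_[p])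
noncomputable abbrev gP : MvPolynomial (Fin 5) ℤ_[p] :=
  X 2 * X 0 + X 3 * X 1 + X 2 * X 3 * X 4

noncomputable abbrev s0 : MvPolynomial (Fin 5) ℤ_[p] →ₐ[ℤ_[p]] MvPolynomial (Fin 5) ℤ_[p] :=
  aeval (fun j : Fin 5 => if j = 0 then 0 else X j)
noncomputable abbrev s3 : MvPolynomial (Fin 5) ℤ_[p] →ₐ[ℤ_[p]] MvPolynomial (Fin 5) ℤ_[p] :=
  aeval (fun j : Fin 5 => if j = 3 then 0 else X j)
noncomputable abbrev s2 : MvPolynomial (Fin 5) ℤ_[p] →ₐ[ℤ_[p]] MvPolynomial (Fin 5) ℤ_[p] :=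
  aeval (fun j : Fin 5 => if j = 2 then 0 else X j)
noncomputable abbrev s23 : MvPolynomial (Fin 5) ℤ_[p] →ₐ[ℤ_[p]] MvPolynomial (Fin 5) ℤ_[p] :=
  aeval (fun j : Fin 5 => if j = 2 ∨ j = 3 then 0 else X j)

lemma s0_sub (h : MvPolynomial (Fin 5) ℤ_[p]) : h - s0 p h ∈ Ideal.span {(X 0 : MvPolynomial (Fin 5) ℤ_[p])} := by
  apply sub_aeval_mem
  intro i
  by_cases hi : i = 0
  · subst hi; simp [Ideal.mem_span_singleton]
  · simp [hi]

lemma s3_sub (h : MvPolynomial (Fin 5) ℤ_[p]) : h - s3 p h ∈ Ideal.span {(X 3 : MvPolynomial (Fin 5) ℤ_[p])} := by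
  apply sub_aeval_mem
  intro i
  by_cases hi : i = 3
  · subst hi; simp [Ideal.mem_span_singleton]
  · simp [hi]

lemma s2_sub (h : MvPolynomial (Fin 5) ℤ_[p]) : h - s2 p h ∈ Ideal.span {(X 2 : MvPolynomial (Fin 5) ℤ_[p])} := by
  apply sub_aeval_mem
  intro i
  by_cases hi : i = 2
  · subst hi; simp [Ideal.mem_span_singleton]
  · simp [hi]

lemma s23_sub (h : MvPolynomial (Fin 5) ℤ_[p]) :
    h - s23 p h ∈ Ideal.span {(X 2 : MvPolynomial (Fin 5) ℤ_[p]), X 3} := by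
  apply sub_aeval_mem
  intro i
  by_cases hi : i = 2
  · subst hi; simp; exact Ideal.subset_span (by simp)
  · by_cases hi3 : i = 3
    · subst hi3; simp; exact Ideal.subset_span (by simp)
    · simp [hi, hi3]

lemma p_ne_zero : (p : ℤ_[p]) ≠ 0 := by
  exact_mod_cast Nat.cast_ne_zero.mpr (Fact.out : p.Prime).ne_zero

lemma Cp_ne_zero : (C (p : ℤ_[p]) : MvPolynomial (Fin 5) ℤ_[p]) ≠ 0 := by
  simpa using p_ne_zero p

-- claim: w * X0^k = β * f  →  f ∣ w
lemma colon_f : ∀ (k : ℕ) (w β : MvPolynomial (Fin 5) ℤ_[p]),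
    w * X 0 ^ k = β * fP p → ∃ γ, w = γ * fP p := by
  intro k
  induction k with
  | zero => intro w β h; exact ⟨β, by simpa using h⟩
  | succ k ih =>
      intro w β h
      have h0 : (0 : MvPolynomial (Fin 5) ℤ_[p]) = s0 p β * (0 - C (p : ℤ_[p])) := by
        have := congrArg (s0 p) h
        simpa using this
      have hβ0 : s0 p β = 0 := by
        rcases mul_eq_zero.mp h0.symm with h' | h'
        · exact h'
        · exfalso; apply Cp_ne_zero p; rw [zero_sub, neg_eq_zero] at h'; exact h'
      have hm : β ∈ Ideal.span {(X 0 : MvPolynomial (Fin 5) ℤ_[p])} := by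
        have := s0_sub p β; rwa [hβ0, sub_zero] at this
      obtain ⟨β', hβ'⟩ := Ideal.mem_span_singleton'.mp hm
      have hx : X 0 * (w * X 0 ^ k) = X 0 * (β' * fP p) := by
        rw [← hβ'] at h; linear_combination h
      exact ih w β' (mul_left_cancel₀ (X_ne_zero 0) hx)

lemma fP_ne_zero : fP p ≠ 0 := by
  intro h
  have := congrArg (constantCoeff) h
  simp at this
  exact (Fact.out : p.Prime).ne_zero this

lemma colon_x (n : ℕ) (u v α β : MvPolynomial (Fin 5) ℤ_[p])
    (h : u * X 0 ^ n = v * X 3 + α * fP p + β * gP p) :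
    u ∈ Ideal.span {(X 2 : MvPolynomial (Fin 5) ℤ_[p]), X 3, fP p} := by
  have h1 : s23 p u * X 0 ^ n = s23 p α * fP p := by
    have := congrArg (s23 p) h
    simpa [fP] using this
  obtain ⟨γ, hγ⟩ := colon_f p n (s23 p u) (s23 p α) h1
  have hmem : u - s23 p u ∈ Ideal.span {(X 2 : MvPolynomial (Fin 5) ℤ_[p]), X 3, fP p} := by
    apply Ideal.span_mono (s := {(X 2 : MvPolynomial (Fin 5) ℤ_[p]), X 3})
    · intro z hz
      simp only [Set.mem_insert_iff, Set.mem_singleton_iff] at *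
      tauto
    · exact s23_sub p u
  have : u = (u - s23 p u) + γ * fP p := by rw [← hγ]; ring
  rw [this]
  refine Ideal.add_mem _ hmem (Ideal.mul_mem_left _ _ (Ideal.subset_span ?_))
  simp

lemma colon_b (u α β : MvPolynomial (Fin 5) ℤ_[p])
    (h : u * X 3 = α * fP p + β * gP p) :
    u ∈ Ideal.span {fP p, gP p} := by
  have h1 : (0 : MvPolynomial (Fin 5) ℤ_[p]) = s3 p α * fP p + s3 p β * (X 2 * X 0) := by
    have := congrArg (s3 p) h
    simpa [fP] using this
  have h2 : s2 p (s3 p α) * fP p = 0 := by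
    have := congrArg (s2 p) h1
    simpa [fP] using this
  have hα0 : s2 p (s3 p α) = 0 := by
    rcases mul_eq_zero.mp h2 with h' | h'
    · exact h'
    · exact absurd h' (fP_ne_zero p)
  obtain ⟨α₁, hα₁⟩ := Ideal.mem_span_singleton'.mp
    (by have := s2_sub p (s3 p α); rwa [hα0, sub_zero] at this :
      s3 p α ∈ Ideal.span {(X 2 : MvPolynomial (Fin 5) ℤ_[p])})
  have h3 : X 2 * (α₁ * fP p + s3 p β * X 0) = 0 := by
    rw [← hα₁] at h1; linear_combination -h1
  have h4 : α₁ * fP p + s3 p β * X 0 = 0 := by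
    rcases mul_eq_zero.mp h3 with h' | h'
    · exact absurd h' (X_ne_zero 2)
    · exact h'
  have h5 : s0 p α₁ * C (p : ℤ_[p]) = 0 := by
    have := congrArg (s0 p) h4
    simpa [fP] using this
  have hα₁0 : s0 p α₁ = 0 := by
    rcases mul_eq_zero.mp h5 with h' | h'
    · exact h'
    · exact absurd h' (Cp_ne_zero p)
  obtain ⟨α₂, hα₂⟩ := Ideal.mem_span_singleton'.mp
    (by have := s0_sub p α₁; rwa [hα₁0, sub_zero] at this :
      α₁ ∈ Ideal.span {(X 0 : MvPolynomial (Fin 5) ℤ_[p])})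
  have h6 : X 0 * (s3 p β + α₂ * fP p) = 0 := by
    rw [← hα₂] at h4; linear_combination h4
  have h7 : s3 p β = -(α₂ * fP p) := by
    rcases mul_eq_zero.mp h6 with h' | h'
    · exact absurd h' (X_ne_zero 0)
    · linear_combination h'
  obtain ⟨α₃, hα₃⟩ := Ideal.mem_span_singleton'.mp (s3_sub p α)
  obtain ⟨β₃, hβ₃⟩ := Ideal.mem_span_singleton'.mp (s3_sub p β)
  have hαx : α = α₂ * X 0 * X 2 + α₃ * X 3 := by
    have : α = s3 p α + α₃ * X 3 := by rw [hα₃]; ring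
    rw [this, ← hα₁, ← hα₂]
  have hβx : β = -(α₂ * fP p) + β₃ * X 3 := by
    have : β = s3 p β + β₃ * X 3 := by rw [hβ₃]; ring
    rw [this, h7]
  have key : X 3 * u = X 3 * ((α₃ - α₂ * (X 1 + X 2 * X 4)) * fP p + β₃ * gP p) := by
    rw [hαx, hβx] at h
    linear_combination h
  rw [Ideal.mem_span_pair]
  exact ⟨α₃ - α₂ * (X 1 + X 2 * X 4), β₃, (mul_left_cancel₀ (X_ne_zero 3) key).symm⟩

noncomputable abbrev Ip : Ideal (MvPolynomial (Fin 5) ℤ_[p]) := Ideal.span {fP p, gP p}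
noncomputable abbrev Bq := MvPolynomial (Fin 5) ℤ_[p] ⧸ Ip p
noncomputable abbrev πq : MvPolynomial (Fin 5) ℤ_[p] →+* Bq p := Ideal.Quotient.mk (Ip p)

lemma b_nzd (z : Bq p) (h : πq p (X 3) * z = 0) : z = 0 := by
  obtain ⟨u, rfl⟩ := Ideal.Quotient.mk_surjective z
  rw [← map_mul, Ideal.Quotient.eq_zero_iff_mem] at h
  obtain ⟨α, β, hαβ⟩ := Ideal.mem_span_pair.mp h
  rw [Ideal.Quotient.eq_zero_iff_mem]
  exact colon_b p u α β (by linear_combination -hαβ)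

lemma colon_quot (n : ℕ) (z w : Bq p) (h : z * πq p (X 0) ^ n + πq p (X 3) * w = 0) :
    ∃ U V : Bq p, z = πq p (X 2) * U + πq p (X 3) * V := by
  obtain ⟨u, rfl⟩ := Ideal.Quotient.mk_surjective z
  obtain ⟨s, rfl⟩ := Ideal.Quotient.mk_surjective w
  rw [← map_pow, ← map_mul, ← map_mul, ← map_add, Ideal.Quotient.eq_zero_iff_mem] at h
  obtain ⟨α, β, hαβ⟩ := Ideal.mem_span_pair.mp h
  have hu : u * X 0 ^ n = (-s) * X 3 + α * fP p + β * gP p := by linear_combination -hαβ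
  have := colon_x p n u (-s) α β hu
  rw [show ({(X 2 : MvPolynomial (Fin 5) ℤ_[p]), X 3, fP p} : Set _)
      = insert (X 2) {X 3, fP p} from rfl, Ideal.span_insert] at this
  obtain ⟨a, ha, zz, hz, rfl⟩ := Submodule.mem_sup.mp this
  obtain ⟨a', ha'⟩ := Ideal.mem_span_singleton'.mp ha
  obtain ⟨b', c', hbc⟩ := Ideal.mem_span_pair.mp hz
  refine ⟨πq p a', πq p b', ?_⟩
  rw [← ha', ← hbc]
  have hf : Ideal.Quotient.mk (Ip p) (fP p) = 0 :=
    Ideal.Quotient.eq_zero_iff_mem.mpr (Ideal.subset_span (by simp))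
  push_cast [map_add, map_mul]
  rw [hf]
  ring

noncomputable abbrev G1 : MvPolynomial (Fin 2) (Bq p) :=
  C (πq p (X 2)) * X 0 + X 1 * C (πq p (X 1)) + C (πq p (X 2)) * X 1 * C (πq p (X 4))
noncomputable abbrev G2 : MvPolynomial (Fin 2) (Bq p) :=
  C (πq p (X 0)) * X 1 - X 0 * C (πq p (X 3))

lemma hg_rel : πq p (X 2) * πq p (X 0) + πq p (X 3) * πq p (X 1) + πq p (X 2) * πq p (X 3) * πq p (X 4) = 0 := by
  rw [← map_mul, ← map_mul, ← map_mul, ← map_mul, ← map_add, ← map_add,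
    Ideal.Quotient.eq_zero_iff_mem]
  exact Ideal.subset_span (by simp)

set_option maxHeartbeats 2000000 in
set_option synthInstance.maxHeartbeats 400000 in
lemma core (n : ℕ) : ∀ (c : ℕ → Bq p),
    (∑ j ∈ Finset.range (n+1), c j * πq p (X 0) ^ j * πq p (X 3) ^ (n-j) = 0) →
    (∑ j ∈ Finset.range (n+1), (C (c j) * X 0 ^ j * X 1 ^ (n-j) : MvPolynomial (Fin 2) (Bq p)))
      ∈ Ideal.span {G1 p, G2 p} := by
  induction n with
  | zero =>
      intro c h
      rw [Finset.sum_range_one] at h ⊢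
      simp only [pow_zero, mul_one, Nat.sub_self] at h ⊢
      rw [h]
      simp
  | succ n ih =>
      intro c h
      rw [Finset.sum_range_succ] at h
      simp only [Nat.sub_self, pow_zero, mul_one] at h
      have hsum : ∑ j ∈ Finset.range (n+1), c j * πq p (X 0) ^ j * πq p (X 3) ^ (n+1-j)
          = πq p (X 3) * ∑ j ∈ Finset.range (n+1), c j * πq p (X 0) ^ j * πq p (X 3) ^ (n-j) := by
        rw [Finset.mul_sum]
        refine Finset.sum_congr rfl fun j hj => ?_
        have hj' : n + 1 - j = (n - j) + 1 := by
          have := Finset.mem_range.mp hj; omega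
        rw [hj', pow_succ]; ring
      rw [hsum] at h
      have h1 : c (n+1) * πq p (X 0) ^ (n+1)
          + πq p (X 3) * ∑ j ∈ Finset.range (n+1), c j * πq p (X 0) ^ j * πq p (X 3) ^ (n-j) = 0 := by
        linear_combination h
      obtain ⟨U, V, hUV⟩ := colon_quot p (n+1) (c (n+1))
        (∑ j ∈ Finset.range (n+1), c j * πq p (X 0) ^ j * πq p (X 3) ^ (n-j)) h1
      have hg : πq p (X 2) * πq p (X 0) + πq p (X 3) * πq p (X 1) + πq p (X 2) * πq p (X 3) * πq p (X 4) = 0 := hg_rel p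
      classical
      obtain ⟨c', hc'n, hc'lt⟩ : ∃ c' : ℕ → Bq p,
          c' n = c n - U*(πq p (X 1) + πq p (X 2)*πq p (X 4)) + V*πq p (X 0)
          ∧ ∀ j ∈ Finset.range n, c' j = c j := by
        refine ⟨fun j => if j = n then
          c n - U*(πq p (X 1) + πq p (X 2)*πq p (X 4)) + V*πq p (X 0) else c j, by simp, ?_⟩
        intro j hj
        have hne : j ≠ n := by have := Finset.mem_range.mp hj; omega
        simp [hne]
      have hS' : ∑ j ∈ Finset.range (n+1), c' j * πq p (X 0) ^ j * πq p (X 3) ^ (n-j)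
          = (∑ j ∈ Finset.range (n+1), c j * πq p (X 0) ^ j * πq p (X 3) ^ (n-j))
            + (-(U*(πq p (X 1) + πq p (X 2)*πq p (X 4))) + V*πq p (X 0)) * πq p (X 0) ^ n := by
        rw [Finset.sum_range_succ, Finset.sum_range_succ]
        rw [Finset.sum_congr rfl (fun j hj => by rw [hc'lt j hj])]
        rw [hc'n]
        simp only [Nat.sub_self, pow_zero, mul_one]
        ring
      have hz : πq p (X 3) * (∑ j ∈ Finset.range (n+1), c' j * πq p (X 0) ^ j * πq p (X 3) ^ (n-j)) = 0 := by
        rw [hS']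
        linear_combination h1 - (U * πq p (X 0)^n) * hg - (πq p (X 0)^(n+1)) * hUV
      have hz' := b_nzd p _ hz
      have hP' := ih c' hz'
      have hQ : ∑ j ∈ Finset.range (n+1+1), (C (c j) * X 0 ^ j * X 1 ^ (n+1-j) : MvPolynomial (Fin 2) (Bq p))
          = X 1 * (∑ j ∈ Finset.range (n+1), C (c' j) * X 0 ^ j * X 1 ^ (n-j))
            + (C U * X 0 ^ n) * G1 p + (-(C V * X 0 ^ n)) * G2 p := by
        rw [Finset.sum_range_succ]
        have hx1 : ∑ j ∈ Finset.range (n+1), (C (c j) * X 0 ^ j * X 1 ^ (n+1-j) : MvPolynomial (Fin 2) (Bq p))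
            = X 1 * ∑ j ∈ Finset.range (n+1), C (c j) * X 0 ^ j * X 1 ^ (n-j) := by
          rw [Finset.mul_sum]
          refine Finset.sum_congr rfl fun j hj => ?_
          have hj' : n + 1 - j = (n - j) + 1 := by
            have := Finset.mem_range.mp hj; omega
          rw [hj', pow_succ]; ring
        rw [hx1]
        have hdiff : ∑ j ∈ Finset.range (n+1), (C (c j) * X 0 ^ j * X 1 ^ (n-j) : MvPolynomial (Fin 2) (Bq p))
            = (∑ j ∈ Finset.range (n+1), C (c' j) * X 0 ^ j * X 1 ^ (n-j))
              + C (U*(πq p (X 1) + πq p (X 2)*πq p (X 4)) - V*πq p (X 0)) * X 0 ^ n := by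
          have hinner : ∑ j ∈ Finset.range n, (C (c' j) * X 0 ^ j * X 1 ^ (n-j) : MvPolynomial (Fin 2) (Bq p))
              = ∑ j ∈ Finset.range n, C (c j) * X 0 ^ j * X 1 ^ (n-j) :=
            Finset.sum_congr rfl (fun j hj => by rw [hc'lt j hj])
          rw [Finset.sum_range_succ, Finset.sum_range_succ, hinner, hc'n]
          simp only [Nat.sub_self, pow_zero, mul_one, map_add, map_sub, map_mul]
          ring
        rw [hdiff, hUV]
        simp only [Nat.sub_self, pow_zero, mul_one, map_add, map_sub, map_mul, G1, G2]
        ring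
      rw [hQ]
      refine Ideal.add_mem _ (Ideal.add_mem _ (Ideal.mul_mem_left _ _ hP') ?_) ?_
      · exact Ideal.mul_mem_left _ _ (Ideal.subset_span (Set.mem_insert _ _))
      · exact Ideal.mul_mem_left _ _ (Ideal.subset_span (Set.mem_insert_of_mem _ rfl))

section General
variable {R : Type*} [CommRing R]

lemma degree_fin2 (m : Fin 2 →₀ ℕ) : m.degree = m 0 + m 1 := by
  have h : ∑ i ∈ m.support, m i = ∑ i : Fin 2, m i :=
    Finset.sum_subset (Finset.subset_univ _)
      (fun i _ hi => Finsupp.notMem_support_iff.mp hi)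
  rw [Finsupp.degree_apply, h, Fin.sum_univ_two]

lemma fin2_eq (m : Fin 2 →₀ ℕ) : Finsupp.single 0 (m 0) + Finsupp.single 1 (m 1) = m := by
  ext i
  fin_cases i <;> simp [Finsupp.single_apply]

lemma monrep (c : R) (j k : ℕ) :
    (C c * X 0 ^ j * X 1 ^ k : MvPolynomial (Fin 2) R)
      = monomial (Finsupp.single 0 j + Finsupp.single 1 k) c := by
  rw [X_pow_eq_monomial, X_pow_eq_monomial, C_apply, monomial_mul, monomial_mul]
  simp

lemma homog_rep {n : ℕ} {G : MvPolynomial (Fin 2) R} (hG : G.IsHomogeneous n) :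
    G = ∑ j ∈ Finset.range (n+1),
      C (coeff (Finsupp.single 0 j + Finsupp.single 1 (n-j)) G) * X 0 ^ j * X 1 ^ (n-j) := by
  apply MvPolynomial.ext
  intro m
  rw [MvPolynomial.coeff_sum]
  have hterm : ∀ j, coeff m ((C (coeff (Finsupp.single 0 j + Finsupp.single 1 (n-j)) G)
        * X 0 ^ j * X 1 ^ (n-j) : MvPolynomial (Fin 2) R))
      = if (Finsupp.single 0 j + Finsupp.single 1 (n-j) : Fin 2 →₀ ℕ) = m
        then coeff (Finsupp.single 0 j + Finsupp.single 1 (n-j)) G else 0 := fun j => by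
    rw [monrep, coeff_monomial]
  rw [Finset.sum_congr rfl (fun j _ => hterm j)]
  by_cases hm : m 0 + m 1 = n
  · rw [Finset.sum_eq_single (m 0)]
    · have hself : (Finsupp.single 0 (m 0) + Finsupp.single 1 (n - m 0) : Fin 2 →₀ ℕ) = m := by
        rw [show n - m 0 = m 1 by omega]
        exact fin2_eq m
      rw [if_pos hself, hself]
    · intro j hj hne
      rw [if_neg]
      intro habs
      apply hne
      have := congrArg (fun f : Fin 2 →₀ ℕ => f 0) habs
      simpa [Finsupp.single_apply] using this
    · intro habs
      exact absurd (Finset.mem_range.mpr (by omega)) habs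
  · rw [hG.coeff_eq_zero (by rw [degree_fin2]; exact hm)]
    symm
    apply Finset.sum_eq_zero
    intro j hj
    rw [if_neg]
    intro habs
    apply hm
    have h0 := congrArg (fun f : Fin 2 →₀ ℕ => f 0) habs
    have h1 := congrArg (fun f : Fin 2 →₀ ℕ => f 1) habs
    simp [Finsupp.single_apply] at h0 h1
    have hjn : j < n + 1 := Finset.mem_range.mp hj
    omega

lemma phi_term (u v c : R) (j k : ℕ) :
    aeval ![Polynomial.C u * Polynomial.X, Polynomial.C v * Polynomial.X]
        ((C c * X 0 ^ j * X 1 ^ k : MvPolynomial (Fin 2) R))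
      = Polynomial.C (c * u ^ j * v ^ k) * Polynomial.X ^ (j + k) := by
  simp only [map_mul, map_pow, aeval_X, aeval_C, Matrix.cons_val_zero, Matrix.cons_val_one,
    Matrix.head_cons, Polynomial.algebraMap_eq, mul_pow]
  ring

lemma phi_homog (u v : R) {n : ℕ} {G : MvPolynomial (Fin 2) R} (hG : G.IsHomogeneous n) :
    aeval ![Polynomial.C u * Polynomial.X, Polynomial.C v * Polynomial.X] G
      = Polynomial.C (∑ j ∈ Finset.range (n+1),
          coeff (Finsupp.single 0 j + Finsupp.single 1 (n-j)) G * u ^ j * v ^ (n-j))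
        * Polynomial.X ^ n := by
  conv_lhs => rw [homog_rep hG]
  rw [map_sum]
  rw [Finset.sum_congr rfl (fun j hj => by
    rw [phi_term, show j + (n-j) = n from by
      have := Finset.mem_range.mp hj; omega])]
  rw [← Finset.sum_mul, ← map_sum]

end General

end Stmt19Aux

/- `Proj` of the graded ring `S = B[x̃,b̃]/(ax̃ + b̃y + ab̃c, xb̃ - x̃b)` is the blowup
of `Spec B` along `(x,b)`, where `B = ℤ_p[x,y,a,b,c]/(xy-p, ax+by+abc)`: formalized as
the statement that the graded `B`-algebra map `B[x̃,b̃] → B[T]` (Rees algebra),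
`x̃ ↦ x·T`, `b̃ ↦ b·T`, has kernel exactly `(ax̃ + b̃y + ab̃c, xb̃ - x̃b)` and range the
Rees algebra of `(x,b)` — i.e. `S` is the Rees algebra of `(x,b)`, whose `Proj` is by
definition the blowup.  Variables of `B`: `x = X 0`, `y = X 1`, `a = X 2`, `b = X 3`,
`c = X 4`; of `B[x̃,b̃]`: `x̃ = X 0`, `b̃ = X 1`. -/
set_option maxHeartbeats 2000000 in
set_option synthInstance.maxHeartbeats 400000 in
open Stmt19Aux in
theorem stmt19 (p : ℕ) [Fact p.Prime] (hp : Odd p) :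
    letI I : Ideal (MvPolynomial (Fin 5) ℤ_[p]) :=
      Ideal.span {X 0 * X 1 - C (p : ℤ_[p]),
        X 2 * X 0 + X 3 * X 1 + X 2 * X 3 * X 4}
    letI B := MvPolynomial (Fin 5) ℤ_[p] ⧸ I
    letI π : MvPolynomial (Fin 5) ℤ_[p] →+* B := Ideal.Quotient.mk I
    letI φ : MvPolynomial (Fin 2) B →ₐ[B] Polynomial B :=
      MvPolynomial.aeval
        ![Polynomial.C (π (X 0)) * Polynomial.X,
          Polynomial.C (π (X 3)) * Polynomial.X]
    RingHom.ker (φ : MvPolynomial (Fin 2) B →+* Polynomial B) =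
      Ideal.span
        {C (π (X 2)) * X 0 + X 1 * C (π (X 1)) + C (π (X 2)) * X 1 * C (π (X 4)),
         C (π (X 0)) * X 1 - X 0 * C (π (X 3))} ∧
    φ.range = reesAlgebra (Ideal.span {π (X 0), π (X 3)}) := by
  constructor
  · -- the kernel computation
    apply le_antisymm
    · intro F hF
      have hF' : (MvPolynomial.aeval
          ![Polynomial.C (πq p (X 0)) * Polynomial.X,
            Polynomial.C (πq p (X 3)) * Polynomial.X]) F = (0 : Polynomial (Bq p)) := hF
      rw [← MvPolynomial.sum_homogeneousComponent F]
      apply Ideal.sum_mem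
      intro n hn
      have hGn := MvPolynomial.homogeneousComponent_isHomogeneous n F
      have hs : ∑ j ∈ Finset.range (n+1),
          (coeff (Finsupp.single 0 j + Finsupp.single 1 (n-j)) ((homogeneousComponent n) F))
            * (πq p) (X 0) ^ j * (πq p) (X 3) ^ (n-j) = 0 := by
        have h1 : ∀ k, Polynomial.coeff
            ((MvPolynomial.aeval
              ![Polynomial.C (πq p (X 0)) * Polynomial.X,
                Polynomial.C (πq p (X 3)) * Polynomial.X]) ((homogeneousComponent k) F)) n
            = if n = k then (∑ j ∈ Finset.range (k+1),
                coeff (Finsupp.single 0 j + Finsupp.single 1 (k-j)) ((homogeneousComponent k) F)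
                  * (πq p) (X 0) ^ j * (πq p) (X 3) ^ (k-j)) else 0 := fun k => by
          rw [phi_homog _ _ (MvPolynomial.homogeneousComponent_isHomogeneous k F)]
          exact Polynomial.coeff_C_mul_X_pow _ _ _
        have h2 := congrArg (fun q : Polynomial (Bq p) => q.coeff n) hF'
        simp only [Polynomial.coeff_zero] at h2
        conv_lhs at h2 => rw [← MvPolynomial.sum_homogeneousComponent F, map_sum]
        rw [Polynomial.finset_sum_coeff, Finset.sum_congr rfl (fun k _ => h1 k),
          Finset.sum_ite_eq _ n _, if_pos hn] at h2
        exact h2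
      have hcore := core p n
        (fun j => coeff (Finsupp.single 0 j + Finsupp.single 1 (n-j)) ((homogeneousComponent n) F))
        hs
      rw [homog_rep hGn]
      exact hcore
    · rw [Ideal.span_le]
      intro G hG
      have hg2 : (Ideal.Quotient.mk (Ideal.span {X 0 * X 1 - C (p : ℤ_[p]),
            X 2 * X 0 + X 3 * X 1 + X 2 * X 3 * X 4})) (X 2)
            * (Ideal.Quotient.mk (Ideal.span {X 0 * X 1 - C (p : ℤ_[p]),
            X 2 * X 0 + X 3 * X 1 + X 2 * X 3 * X 4})) (X 0)
          + (Ideal.Quotient.mk (Ideal.span {X 0 * X 1 - C (p : ℤ_[p]),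
            X 2 * X 0 + X 3 * X 1 + X 2 * X 3 * X 4})) (X 3)
            * (Ideal.Quotient.mk (Ideal.span {X 0 * X 1 - C (p : ℤ_[p]),
            X 2 * X 0 + X 3 * X 1 + X 2 * X 3 * X 4})) (X 1)
          + (Ideal.Quotient.mk (Ideal.span {X 0 * X 1 - C (p : ℤ_[p]),
            X 2 * X 0 + X 3 * X 1 + X 2 * X 3 * X 4})) (X 2)
            * (Ideal.Quotient.mk (Ideal.span {X 0 * X 1 - C (p : ℤ_[p]),
            X 2 * X 0 + X 3 * X 1 + X 2 * X 3 * X 4})) (X 3)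
            * (Ideal.Quotient.mk (Ideal.span {X 0 * X 1 - C (p : ℤ_[p]),
            X 2 * X 0 + X 3 * X 1 + X 2 * X 3 * X 4})) (X 4)
          = (0 : MvPolynomial (Fin 5) ℤ_[p] ⧸ Ideal.span {X 0 * X 1 - C (p : ℤ_[p]),
            X 2 * X 0 + X 3 * X 1 + X 2 * X 3 * X 4}) := by
        rw [← map_mul, ← map_mul, ← map_mul, ← map_mul, ← map_add, ← map_add,
          Ideal.Quotient.eq_zero_iff_mem]
        exact Ideal.subset_span (by simp)
      have hg' := congrArg (fun z => (Polynomial.C z)) hg2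
      simp only [map_add, map_mul, map_zero] at hg'
      simp only [Set.mem_insert_iff, Set.mem_singleton_iff] at hG
      rcases hG with rfl | rfl
      · simp only [SetLike.mem_coe, RingHom.mem_ker, RingHom.coe_coe, map_add, map_sub, map_mul,
          aeval_X, aeval_C, Matrix.cons_val_zero, Matrix.cons_val_one, Matrix.head_cons,
          Polynomial.algebraMap_eq]
        linear_combination Polynomial.X * hg'
      · simp only [SetLike.mem_coe, RingHom.mem_ker, RingHom.coe_coe, map_add, map_sub, map_mul,
          aeval_X, aeval_C, Matrix.cons_val_zero, Matrix.cons_val_one, Matrix.head_cons,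
          Polynomial.algebraMap_eq]
        ring
  · -- the range computation
    have hmap : Submodule.map (Polynomial.monomial 1)
        (Ideal.span ({(Ideal.Quotient.mk (Ideal.span {X 0 * X 1 - C (p : ℤ_[p]), X 2 * X 0 + X 3 * X 1 + X 2 * X 3 * X 4})) (X 0), (Ideal.Quotient.mk (Ideal.span {X 0 * X 1 - C (p : ℤ_[p]), X 2 * X 0 + X 3 * X 1 + X 2 * X 3 * X 4})) (X 3)} :
          Set (MvPolynomial (Fin 5) ℤ_[p] ⧸ Ideal.span {X 0 * X 1 - C (p : ℤ_[p]), X 2 * X 0 + X 3 * X 1 + X 2 * X 3 * X 4})))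
        = Submodule.span _
          {Polynomial.monomial 1 ((Ideal.Quotient.mk (Ideal.span {X 0 * X 1 - C (p : ℤ_[p]), X 2 * X 0 + X 3 * X 1 + X 2 * X 3 * X 4})) (X 0)), Polynomial.monomial 1 ((Ideal.Quotient.mk (Ideal.span {X 0 * X 1 - C (p : ℤ_[p]), X 2 * X 0 + X 3 * X 1 + X 2 * X 3 * X 4})) (X 3))} := by
      have h := Submodule.map_span (Polynomial.monomial 1 :
          _ →ₗ[MvPolynomial (Fin 5) ℤ_[p] ⧸ Ideal.span {X 0 * X 1 - C (p : ℤ_[p]), X 2 * X 0 + X 3 * X 1 + X 2 * X 3 * X 4}] _)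
          ({(Ideal.Quotient.mk (Ideal.span {X 0 * X 1 - C (p : ℤ_[p]), X 2 * X 0 + X 3 * X 1 + X 2 * X 3 * X 4})) (X 0), (Ideal.Quotient.mk (Ideal.span {X 0 * X 1 - C (p : ℤ_[p]), X 2 * X 0 + X 3 * X 1 + X 2 * X 3 * X 4})) (X 3)} : Set _)
      rw [Set.image_pair] at h
      exact h
    rw [← adjoin_monomial_eq_reesAlgebra, hmap, Algebra.adjoin_span,
      Polynomial.C_mul_X_eq_monomial, Polynomial.C_mul_X_eq_monomial]
    refine (Algebra.adjoin_range_eq_range_aeval (MvPolynomial (Fin 5) ℤ_[p] ⧸ Ideal.span {X 0 * X 1 - C (p : ℤ_[p]), X 2 * X 0 + X 3 * X 1 + X 2 * X 3 * X 4})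
      ![Polynomial.monomial 1 ((Ideal.Quotient.mk (Ideal.span {X 0 * X 1 - C (p : ℤ_[p]), X 2 * X 0 + X 3 * X 1 + X 2 * X 3 * X 4})) (X 0 : MvPolynomial (Fin 5) ℤ_[p])),
        Polynomial.monomial 1 ((Ideal.Quotient.mk (Ideal.span {X 0 * X 1 - C (p : ℤ_[p]), X 2 * X 0 + X 3 * X 1 + X 2 * X 3 * X 4})) (X 3 : MvPolynomial (Fin 5) ℤ_[p]))]).symm.trans ?_
    rw [Matrix.range_cons_cons_empty]
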